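/- Let A be an abelian category with enough injectives and let (W, F) and (W', F') be injective cotorsion pairs with F' ⊆ F. Then for any short exact sequence 0 → X → Y → Z → 0 with X ∈ F and Y, Z ∈ F', one has X ∈ F'. -/

import Mathlib

open CategoryTheory CategoryTheory.Limits

universe w v u

variable {A : Type u} [Category.{v} A] [Abelian A]

/-- `IsShortExact i p` asserts that `0 → X → Y → Z → 0` is a short exact sequence. -/
def IsShortExact {X Y Z : A} (i : X ⟶ Y) (p : Y ⟶ Z) : Prop :=
  ∃ w : i ≫ p = 0, (ShortComplex.mk i p w).ShortExact

section Ext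

variable [HasExt.{w} A]

/-- `Ext¹(X, Y) = 0`. -/
def Ext1Zero (X Y : A) : Prop := Subsingleton (Abelian.Ext X Y 1)

/-- `(F, C)` is a cotorsion pair: each class is the `Ext¹`-orthogonal of the other. -/
def IsCotorsionPair (F C : Set A) : Prop :=
  (∀ X : A, X ∈ F ↔ ∀ Y ∈ C, Ext1Zero.{w} X Y) ∧
  (∀ Y : A, Y ∈ C ↔ ∀ X ∈ F, Ext1Zero.{w} X Y)

/-- A complete cotorsion pair: for every object `X` there are short exact sequences
`0 → C → F → X → 0` and `0 → X → C' → F' → 0` with `F, F'` in the left class and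
`C, C'` in the right class. -/
def IsCompleteCotorsionPair (F C : Set A) : Prop :=
  IsCotorsionPair.{w} F C ∧
  (∀ X : A, ∃ (Co Fo : A) (i : Co ⟶ Fo) (p : Fo ⟶ X),
    Co ∈ C ∧ Fo ∈ F ∧ IsShortExact i p) ∧
  (∀ X : A, ∃ (Co Fo : A) (i : X ⟶ Co) (p : Co ⟶ Fo),
    Co ∈ C ∧ Fo ∈ F ∧ IsShortExact i p)

end Ext

/-- A thick class: closed under direct summands (retracts) and satisfying two-out-of-three
for short exact sequences. -/
def IsThickClass (W : Set A) : Prop :=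
  (∀ (X Y : A) (s : Y ⟶ X) (r : X ⟶ Y), s ≫ r = 𝟙 Y → X ∈ W → Y ∈ W) ∧
  (∀ ⦃X Y Z : A⦄ (i : X ⟶ Y) (p : Y ⟶ Z), IsShortExact i p →
    (X ∈ W → Y ∈ W → Z ∈ W) ∧ (X ∈ W → Z ∈ W → Y ∈ W) ∧ (Y ∈ W → Z ∈ W → X ∈ W))

/-- The class `F` is closed under kernels of epimorphisms between objects of `F`. -/
def ClosedUnderKernelsOfEpis (F : Set A) : Prop :=
  ∀ ⦃X Y Z : A⦄ (i : X ⟶ Y) (p : Y ⟶ Z), IsShortExact i p → Y ∈ F → Z ∈ F → X ∈ F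

/-- The class `C` is closed under cokernels of monomorphisms between objects of `C`. -/
def ClosedUnderCokernelsOfMonos (C : Set A) : Prop :=
  ∀ ⦃X Y Z : A⦄ (i : X ⟶ Y) (p : Y ⟶ Z), IsShortExact i p → X ∈ C → Y ∈ C → Z ∈ C

/-- An injective cotorsion pair: a complete cotorsion pair `(W, F)` with `W` thick and
`W ∩ F` equal to the class of injective objects. -/
def IsInjectiveCotorsionPair [HasExt.{w} A] (W F : Set A) : Prop :=
  IsCompleteCotorsionPair.{w} W F ∧ IsThickClass W ∧
  ∀ X : A, (X ∈ W ∧ X ∈ F) ↔ Injective X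

/-- A projective cotorsion pair: a complete cotorsion pair `(C, W)` with `W` thick and
`C ∩ W` equal to the class of projective objects. -/
def IsProjectiveCotorsionPair [HasExt.{w} A] (C W : Set A) : Prop :=
  IsCompleteCotorsionPair.{w} C W ∧ IsThickClass W ∧
  ∀ X : A, (X ∈ C ∧ X ∈ W) ↔ Projective X

/-- A Hovey triple `(Q, W, R)`: `W` is thick and both `(Q, W ∩ R)` and `(Q ∩ W, R)` are
complete cotorsion pairs. -/
def IsHoveyTriple [HasExt.{w} A] (Q W R : Set A) : Prop :=
  IsThickClass W ∧ IsCompleteCotorsionPair.{w} Q (W ∩ R) ∧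
    IsCompleteCotorsionPair.{w} (Q ∩ W) R


section Aux

lemma ext1zero_eq [HasExt.{w} A] {X Y : A} (h : Ext1Zero.{w} X Y)
    (a b : Abelian.Ext X Y 1) : a = b :=
  @Subsingleton.allEq _ h a b

/-- If `0 → X → Y → Z → 0` is exact with `i` mono and `p` a cokernel of `i`, then for any
`j : X ⟶ X'`, the sequence `0 → X' → pushout j i → Z → 0` (via `inl`) is short exact. -/
lemma pushout_inl_shortExact {X Y X' Z : A} (j : X ⟶ X') (i : X ⟶ Y) [Mono i]
    (p : Y ⟶ Z) [Epi p] (wp : i ≫ p = 0) (hp : IsColimit (CokernelCofork.ofπ p wp)) :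
    (ShortComplex.mk (pushout.inl j i) (pushout.desc 0 p (by rw [comp_zero, wp]))
      (pushout.inl_desc _ _ _)).ShortExact := by
  have hw : j ≫ (0 : X' ⟶ Z) = i ≫ p := by rw [comp_zero, wp]
  have hepi : Epi (pushout.desc (0 : X' ⟶ Z) p hw) :=
    epi_of_epi_fac (pushout.inr_desc _ _ _)
  have h0 : ∀ {T : A} (t : pushout j i ⟶ T), pushout.inl j i ≫ t = 0 →
      i ≫ (pushout.inr j i ≫ t) = 0 := fun {T} t ht => by
    rw [← Category.assoc, ← pushout.condition, Category.assoc, ht, comp_zero]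
  have hcolim : IsColimit (CokernelCofork.ofπ (pushout.desc (0 : X' ⟶ Z) p hw)
      (pushout.inl_desc _ _ _)) :=
    CokernelCofork.IsColimit.ofπ' _ _ (fun {T} t ht =>
      ⟨hp.desc (CokernelCofork.ofπ (pushout.inr j i ≫ t) (h0 t ht)), by
        have hd := Cofork.IsColimit.π_desc (s := CokernelCofork.ofπ p wp)
          (t := CokernelCofork.ofπ (pushout.inr j i ≫ t) (h0 t ht)) hp
        simp only [Cofork.π_ofπ] at hd
        apply pushout.hom_ext
        · rw [pushout.inl_desc_assoc, zero_comp, ht]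
        · rw [pushout.inr_desc_assoc]; exact hd⟩)
  exact ShortComplex.ShortExact.mk' (ShortComplex.exact_of_g_is_cokernel _ hcolim)
    inferInstance hepi

/-- If `0 → X → X' → W → 0` is exact with `j` mono and `p'` a cokernel of `j`, then for any
`i : X ⟶ Y`, the sequence `0 → Y → pushout j i → W → 0` (via `inr`) is short exact. -/
lemma pushout_inr_shortExact {X Y X' W₀ : A} (j : X ⟶ X') (i : X ⟶ Y) [Mono j]
    (p' : X' ⟶ W₀) [Epi p'] (wp : j ≫ p' = 0) (hp : IsColimit (CokernelCofork.ofπ p' wp)) :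
    (ShortComplex.mk (pushout.inr j i) (pushout.desc p' 0 (by rw [comp_zero, wp]))
      (pushout.inr_desc _ _ _)).ShortExact := by
  have hw : j ≫ p' = i ≫ (0 : Y ⟶ W₀) := by rw [comp_zero, wp]
  have hepi : Epi (pushout.desc p' (0 : Y ⟶ W₀) hw) :=
    epi_of_epi_fac (pushout.inl_desc _ _ _)
  have h0 : ∀ {T : A} (t : pushout j i ⟶ T), pushout.inr j i ≫ t = 0 →
      j ≫ (pushout.inl j i ≫ t) = 0 := fun {T} t ht => by
    rw [← Category.assoc, pushout.condition, Category.assoc, ht, comp_zero]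
  have hcolim : IsColimit (CokernelCofork.ofπ (pushout.desc p' (0 : Y ⟶ W₀) hw)
      (pushout.inr_desc _ _ _)) :=
    CokernelCofork.IsColimit.ofπ' _ _ (fun {T} t ht =>
      ⟨hp.desc (CokernelCofork.ofπ (pushout.inl j i ≫ t) (h0 t ht)), by
        have hd := Cofork.IsColimit.π_desc (s := CokernelCofork.ofπ p' wp)
          (t := CokernelCofork.ofπ (pushout.inl j i ≫ t) (h0 t ht)) hp
        simp only [Cofork.π_ofπ] at hd
        apply pushout.hom_ext
        · rw [pushout.inl_desc_assoc]; exact hd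
        · rw [pushout.inr_desc_assoc, zero_comp, ht]⟩)
  exact ShortComplex.ShortExact.mk' (ShortComplex.exact_of_g_is_cokernel _ hcolim)
    inferInstance hepi

section ExtAux

variable [HasExt.{w} A]

lemma ext1Zero_of_extension {v : A} {S : ShortComplex A} (hS : S.ShortExact)
    (h1 : Ext1Zero.{w} v S.X₁) (h3 : Ext1Zero.{w} v S.X₃) : Ext1Zero.{w} v S.X₂ := by
  have hz : ∀ e : Abelian.Ext v S.X₂ 1, e = 0 := by
    intro e
    obtain ⟨x₁, hx₁⟩ := Abelian.Ext.covariant_sequence_exact₂ v hS e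
      (ext1zero_eq h3 _ 0)
    rw [← hx₁, ext1zero_eq h1 x₁ 0, Abelian.Ext.zero_comp]
  exact ⟨fun a b => by rw [hz a, hz b]⟩

lemma ext1Zero_X₃_of_extClass_eq_zero {v : A} {S : ShortComplex A} (hS : S.ShortExact)
    (hcls : hS.extClass = 0) (h2 : Ext1Zero.{w} v S.X₂) : Ext1Zero.{w} v S.X₃ := by
  have hz : ∀ e : Abelian.Ext v S.X₃ 1, e = 0 := by
    intro e
    obtain ⟨x₂, hx₂⟩ := Abelian.Ext.covariant_sequence_exact₃ v hS e rfl
      (by rw [hcls, Abelian.Ext.comp_zero])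
    rw [← hx₂, ext1zero_eq h2 x₂ 0, Abelian.Ext.zero_comp]
  exact ⟨fun a b => by rw [hz a, hz b]⟩

lemma ext1Zero_X₁_of_extClass_eq_zero {v : A} {S : ShortComplex A} (hS : S.ShortExact)
    (hcls : hS.extClass = 0) (h2 : Ext1Zero.{w} v S.X₂) : Ext1Zero.{w} v S.X₁ := by
  have hz : ∀ e : Abelian.Ext v S.X₁ 1, e = 0 := by
    intro e
    obtain ⟨x₃, hx₃⟩ := Abelian.Ext.covariant_sequence_exact₁ v hS e
      (ext1zero_eq h2 _ 0) rfl
    rw [← hx₃, hcls, Abelian.Ext.comp_zero]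
  exact ⟨fun a b => by rw [hz a, hz b]⟩

end ExtAux

end Aux

theorem fibrant_subclass_closed_under_kernels [EnoughInjectives A] [HasExt.{w} A]
    (W F W' F' : Set A)
    (h : IsInjectiveCotorsionPair.{w} W F) (h' : IsInjectiveCotorsionPair.{w} W' F')
    (hsub : F' ⊆ F) :
    ∀ ⦃X Y Z : A⦄ (i : X ⟶ Y) (p : Y ⟶ Z), IsShortExact i p →
      X ∈ F → Y ∈ F' → Z ∈ F' → X ∈ F' := by
  intro X Y Z i p hse hXF hYF' hZF'
  obtain ⟨X', w0, j, p', hX'F', hw0W', hse'⟩ := h'.1.2.2 X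
  obtain ⟨wi, hSi⟩ := hse
  obtain ⟨wj, hSj⟩ := hse'
  haveI : Mono i := hSi.mono_f
  haveI : Mono j := hSj.mono_f
  haveI : Epi p := hSi.epi_g
  haveI : Epi p' := hSj.epi_g
  have hS1 := pushout_inl_shortExact j i p wi hSi.gIsCokernel
  have hS2 := pushout_inr_shortExact j i p' wj hSj.gIsCokernel
  -- `Ext¹(v, pushout j i) = 0` for all `v ∈ W'`
  have hP : ∀ v ∈ W', Ext1Zero.{w} v (pushout j i) := fun v hv =>
    ext1Zero_of_extension hS1 ((h'.1.1.2 X').mp hX'F' v hv) ((h'.1.1.2 Z).mp hZF' v hv)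
  -- the second pushout sequence has vanishing extension class
  have hzero2 : hS2.extClass = 0 := ext1zero_eq ((h'.1.1.2 Y).mp hYF' w0 hw0W') _ _
  -- hence `w0 ∈ F'`, so `w0` is injective, so `w0 ∈ W`
  have hw0F' : w0 ∈ F' := (h'.1.1.2 w0).mpr
    (fun v hv => ext1Zero_X₃_of_extClass_eq_zero hS2 hzero2 (hP v hv))
  have hw0inj : Injective w0 := (h'.2.2 w0).mp ⟨hw0W', hw0F'⟩
  have hw0W : w0 ∈ W := ((h.2.2 w0).mpr hw0inj).1
  -- the sequence `0 → X → X' → w0 → 0` has vanishing extension class since `X ∈ F`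
  have hzero' : hSj.extClass = 0 := ext1zero_eq ((h.1.1.2 X).mp hXF w0 hw0W) _ _
  exact (h'.1.1.2 X).mpr
    (fun v hv => ext1Zero_X₁_of_extClass_eq_zero hSj hzero' ((h'.1.1.2 X').mp hX'F' v hv))
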